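/- arXiv:1403.7678 — 3 statements merged into one kernel-verified Lean document; each statement's English description precedes it below -/
import Mathlib

section
/- Let (A*, d) be a finite-dimensional differential graded algebra of n-Poincaré-duality type. Then the cohomology algebra H*(A) is a finite-dimensional graded commutative algebra of n-Poincaré-duality type. -/
/-- A linear functional vanishing on the kernel of `D` factors through `D`. -/
lemma aux_factor {V W : Type*} [AddCommGroup V] [Module ℝ V] [AddCommGroup W] [Module ℝ W]
    (D : V →ₗ[ℝ] W) (φ : V →ₗ[ℝ] ℝ) (h : ∀ x, D x = 0 → φ x = 0) :
    ∃ ψ : W →ₗ[ℝ] ℝ, ∀ x, ψ (D x) = φ x := by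
  have hk : LinearMap.ker D ≤ LinearMap.ker φ := fun x hx => h x hx
  obtain ⟨g, hg⟩ := LinearMap.exists_extend
    (((LinearMap.ker D).liftQ φ hk).comp D.quotKerEquivRange.symm.toLinearMap)
  refine ⟨g, fun x => ?_⟩
  have h1 : D.quotKerEquivRange.symm ⟨D x, LinearMap.mem_range_self D x⟩ =
      Submodule.Quotient.mk x := by
    rw [LinearEquiv.symm_apply_eq]
    exact Subtype.ext (D.quotKerEquivRange_apply_mk x).symm
  have h2 : g (D x) = g ((LinearMap.range D).subtype ⟨D x, LinearMap.mem_range_self D x⟩) := rfl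
  rw [h2, ← LinearMap.comp_apply, hg]
  simp [h1]

/-- A bilinear pairing between finite-dimensional real vector spaces that is separating on
both sides is surjective onto the dual. -/
lemma aux_surj {V W : Type*} [AddCommGroup V] [Module ℝ V] [AddCommGroup W] [Module ℝ W]
    [FiniteDimensional ℝ V] [FiniteDimensional ℝ W]
    (B : V →ₗ[ℝ] Module.Dual ℝ W)
    (hl : ∀ x, (∀ y, B x y = 0) → x = 0)
    (hr : ∀ y, (∀ x, B x y = 0) → y = 0) :
    Function.Surjective B := by
  have hBinj : Function.Injective B := by
    rw [← LinearMap.ker_eq_bot, Submodule.eq_bot_iff]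
    intro x hx
    rw [LinearMap.mem_ker] at hx
    exact hl x fun y => by rw [hx]; rfl
  have hFinj : Function.Injective B.flip := by
    rw [← LinearMap.ker_eq_bot, Submodule.eq_bot_iff]
    intro y hy
    rw [LinearMap.mem_ker] at hy
    exact hr y fun x => by
      have : B.flip y x = 0 := by rw [hy]; rfl
      rwa [LinearMap.flip_apply] at this
  have e1 : Module.finrank ℝ V ≤ Module.finrank ℝ W := by
    have := LinearMap.finrank_le_finrank_of_injective hBinj
    rwa [Subspace.dual_finrank_eq] at this
  have e2 : Module.finrank ℝ W ≤ Module.finrank ℝ V := by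
    have := LinearMap.finrank_le_finrank_of_injective hFinj
    rwa [Subspace.dual_finrank_eq] at this
  rw [← LinearMap.range_eq_top]
  apply Submodule.eq_top_of_finrank_eq
  rw [LinearMap.finrank_range_of_inj hBinj, Subspace.dual_finrank_eq]
  omega

/-- The multiplication pairing `𝒜 a × 𝒜 b → 𝒜 n` composed with a functional on `𝒜 n`. -/
noncomputable def PDpair {A : Type*} [Ring A] [Algebra ℝ A]
    (𝒜 : ℕ → Submodule ℝ A) [GradedAlgebra 𝒜] {n a b : ℕ} (hab : a + b = n)
    (c : ↥(𝒜 n) →ₗ[ℝ] ℝ) : ↥(𝒜 a) →ₗ[ℝ] Module.Dual ℝ ↥(𝒜 b) :=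
  LinearMap.mk₂ ℝ
    (fun x y => c ⟨(x : A) * y, by rw [← hab]; exact SetLike.mul_mem_graded x.2 y.2⟩)
    (fun x x' y => by beta_reduce; rw [← map_add]; congr 1; apply Subtype.ext; simp [add_mul])
    (fun r x y => by beta_reduce; rw [← map_smul]; congr 1; apply Subtype.ext; simp [smul_mul_assoc])
    (fun x y y' => by beta_reduce; rw [← map_add]; congr 1; apply Subtype.ext; simp [mul_add])
    (fun r x y => by beta_reduce; rw [← map_smul]; congr 1; apply Subtype.ext; simp [mul_smul_comm])

@[simp] lemma PDpair_apply {A : Type*} [Ring A] [Algebra ℝ A]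
    (𝒜 : ℕ → Submodule ℝ A) [GradedAlgebra 𝒜] {n a b : ℕ} (hab : a + b = n)
    (c : ↥(𝒜 n) →ₗ[ℝ] ℝ) (x : ↥(𝒜 a)) (y : ↥(𝒜 b)) :
    PDpair 𝒜 hab c x y =
      c ⟨(x : A) * y, by rw [← hab]; exact SetLike.mul_mem_graded x.2 y.2⟩ := rfl

/-- Let `(A*, d)` be a finite-dimensional DGA of `n`-PD-type (graded commutative, `𝒜 0 = ℝ·1`,
`𝒜 n = ℝ·v`, `𝒜 i = 0` for `i > n`, non-degenerate multiplication pairings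
`𝒜 i × 𝒜 (n-i) → 𝒜 n`, and `d 𝒜 (n-1) = 0`, `d 𝒜 0 = 0`).  Then the cohomology algebra
`H*(A)` is a finite-dimensional graded commutative algebra of `n`-PD-type:
`H⁰` is spanned by the nonzero class `[1]`, `Hⁿ` is spanned by the nonzero class `[v]`,
and the induced pairings `Hⁱ × H^{n-i} → Hⁿ` are non-degenerate. -/
theorem stmt_3 (A : Type*) [Ring A] [Algebra ℝ A] [FiniteDimensional ℝ A]
    (n : ℕ) (𝒜 : ℕ → Submodule ℝ A) [GradedAlgebra 𝒜]
    (hcomm : ∀ (i j : ℕ) (x y : A), x ∈ 𝒜 i → y ∈ 𝒜 j →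
      x * y = ((-1 : ℤ) ^ (i * j)) • (y * x))
    (hone : (1 : A) ≠ 0) (hzero : ∀ x ∈ 𝒜 0, ∃ c : ℝ, x = c • (1 : A))
    (htop : ∀ i, n < i → 𝒜 i = ⊥)
    (v : A) (hv : v ∈ 𝒜 n) (hvne : v ≠ 0) (hvspan : ∀ x ∈ 𝒜 n, ∃ c : ℝ, x = c • v)
    (hnd : ∀ i, 0 < i → i < n →
      (∀ x ∈ 𝒜 i, (∀ y ∈ 𝒜 (n - i), x * y = 0) → x = 0) ∧
      (∀ y ∈ 𝒜 (n - i), (∀ x ∈ 𝒜 i, x * y = 0) → y = 0))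
    -- the differential
    (d : A →ₗ[ℝ] A)
    (hd : ∀ i, ∀ x ∈ 𝒜 i, d x ∈ 𝒜 (i + 1))
    (hdd : d.comp d = 0)
    (hleib : ∀ (i : ℕ) (x y : A), x ∈ 𝒜 i →
      d (x * y) = d x * y + ((-1 : ℤ) ^ i) • (x * d y))
    (hdn : ∀ x ∈ 𝒜 (n - 1), d x = 0)
    (hd0 : ∀ x ∈ 𝒜 0, d x = 0) :
    -- H⁰(A) = ℝ·[1], with [1] ≠ 0:
    ((1 : A) ∉ LinearMap.range d ∧
      ∀ x ∈ 𝒜 0 ⊓ LinearMap.ker d, ∃ c : ℝ, x = c • (1 : A)) ∧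
    -- Hⁿ(A) = ℝ·[v], with [v] ≠ 0:
    (v ∉ Submodule.map d (𝒜 (n - 1)) ∧
      ∀ x ∈ 𝒜 n ⊓ LinearMap.ker d, ∃ c : ℝ,
        x - c • v ∈ Submodule.map d (𝒜 (n - 1))) ∧
    -- non-degeneracy of the induced pairings Hⁱ × H^{n-i} → Hⁿ:
    (∀ i, 0 < i → i < n →
      (∀ x ∈ 𝒜 i ⊓ LinearMap.ker d, x ∉ Submodule.map d (𝒜 (i - 1)) →
        ∃ y ∈ 𝒜 (n - i) ⊓ LinearMap.ker d,
          x * y ∉ Submodule.map d (𝒜 (n - 1))) ∧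
      (∀ y ∈ 𝒜 (n - i) ⊓ LinearMap.ker d, y ∉ Submodule.map d (𝒜 (n - i - 1)) →
        ∃ x ∈ 𝒜 i ⊓ LinearMap.ker d,
          x * y ∉ Submodule.map d (𝒜 (n - 1)))) := by
  classical
  have hvn : (⟨v, hv⟩ : 𝒜 n) ≠ 0 := fun h => hvne (congrArg Subtype.val h)
  -- the coefficient functional on `𝒜 n`
  obtain ⟨cL, hcLspec⟩ : ∃ cL : ↥(𝒜 n) →ₗ[ℝ] ℝ, ∀ z : ↥(𝒜 n), (z : A) = cL z • v := by
    have hinj : Function.Injective (LinearMap.toSpanSingleton ℝ (𝒜 n) ⟨v, hv⟩) := by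
      rw [← LinearMap.ker_eq_bot]
      exact LinearMap.ker_toSpanSingleton ℝ hvn
    have hsurj : Function.Surjective (LinearMap.toSpanSingleton ℝ (𝒜 n) ⟨v, hv⟩) := by
      intro z
      obtain ⟨c, hc⟩ := hvspan z z.2
      exact ⟨c, Subtype.ext (by simpa [LinearMap.toSpanSingleton_apply] using hc.symm)⟩
    set e := LinearEquiv.ofBijective _ ⟨hinj, hsurj⟩ with he
    refine ⟨e.symm.toLinearMap, fun z => ?_⟩
    conv_lhs => rw [← e.apply_symm_apply z]
    rfl
  have hcL0 : ∀ z : ↥(𝒜 n), cL z = 0 → (z : A) = 0 := fun z h => by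
    rw [hcLspec z, h, zero_smul]
  have hcLzero : ∀ z : ↥(𝒜 n), (z : A) = 0 → cL z = 0 := fun z h => by
    rw [show z = 0 from Subtype.ext h, map_zero]
  have hone0 : (1 : A) ∈ 𝒜 0 := SetLike.one_mem_graded 𝒜
  -- separating property of the pairing in all complementary degrees
  have hsepL : ∀ a b : ℕ, a + b = n → ∀ x ∈ 𝒜 a, (∀ y ∈ 𝒜 b, x * y = 0) → x = 0 := by
    intro a b hab x hx hxy
    rcases Nat.eq_zero_or_pos a with ha | ha
    · have hb : b = n := by omega
      obtain ⟨c, hc⟩ := hzero x (by rw [← ha]; exact hx)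
      have h0 := hxy v (by rw [hb]; exact hv)
      rw [hc, smul_mul_assoc, one_mul] at h0
      rcases smul_eq_zero.1 h0 with h | h
      · rw [hc, h, zero_smul]
      · exact absurd h hvne
    · rcases Nat.lt_or_ge a n with hlt | hge
      · have hb : b = n - a := by omega
        exact (hnd a ha hlt).1 x hx (fun y hy => hxy y (by rw [hb]; exact hy))
      · have hb : b = 0 := by omega
        have h0 := hxy 1 (by rw [hb]; exact hone0)
        rwa [mul_one] at h0
  have hsepR : ∀ a b : ℕ, a + b = n → ∀ y ∈ 𝒜 b, (∀ x ∈ 𝒜 a, x * y = 0) → y = 0 := by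
    intro a b hab y hy hxy
    rcases Nat.eq_zero_or_pos a with ha | ha
    · have h0 := hxy 1 (by rw [ha]; exact hone0)
      rwa [one_mul] at h0
    · rcases Nat.lt_or_ge a n with hlt | hge
      · have hb : b = n - a := by omega
        exact (hnd a ha hlt).2 y (by rw [← hb]; exact hy) hxy
      · have hb : b = 0 := by omega
        have ha' : a = n := by omega
        obtain ⟨c, hc⟩ := hzero y (by rw [← hb]; exact hy)
        have h0 := hxy v (by rw [ha']; exact hv)
        rw [hc, mul_smul_comm, mul_one] at h0
        rcases smul_eq_zero.1 h0 with h | h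
        · rw [hc, h, zero_smul]
        · exact absurd h hvne
  -- the boundaries in top degree vanish
  have hmap0 : ∀ z ∈ Submodule.map d (𝒜 (n - 1)), z = 0 := by
    rintro z ⟨w, hw, rfl⟩
    exact hdn w hw
  have hcast : ∀ (k : ℕ) (a : A), ((-1 : ℤ) ^ k) • a = ((-1 : ℝ) ^ k) • a := by
    intro k a
    rw [← Int.cast_smul_eq_zsmul ℝ]
    norm_num
  -- KEY: a closed class of positive degree `i` killing all closed classes of degree `j = n - i`
  -- is a boundary
  have key : ∀ i j : ℕ, 0 < i → i + j = n → ∀ x ∈ 𝒜 i,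
      (∀ y ∈ 𝒜 j, d y = 0 → x * y = 0) → x ∈ Submodule.map d (𝒜 (i - 1)) := by
    intro i j hi hij x hx hxy
    set D : ↥(𝒜 j) →ₗ[ℝ] ↥(𝒜 (j + 1)) :=
      d.restrict (p := 𝒜 j) (q := 𝒜 (j + 1)) (fun z hz => hd j z hz) with hD
    have hDcoe : ∀ y : ↥(𝒜 j), ((D y : ↥(𝒜 (j + 1))) : A) = d (y : A) := fun y => rfl
    have hφ : ∀ y : ↥(𝒜 j), D y = 0 → (PDpair 𝒜 hij cL ⟨x, hx⟩) y = 0 := by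
      intro y hy
      have hdy : d (y : A) = 0 := by rw [← hDcoe y, hy]; simp
      exact hcLzero _ (hxy y y.2 hdy)
    obtain ⟨ψ, hψ⟩ := aux_factor D (PDpair 𝒜 hij cL ⟨x, hx⟩) hφ
    have h' : (i - 1) + (j + 1) = n := by omega
    have hBsurj := aux_surj (PDpair 𝒜 h' cL)
      (fun ξ h0 => by
        exact Subtype.ext (hsepL (i - 1) (j + 1) h' ξ ξ.2
          (fun z hz => hcL0 _ (h0 ⟨z, hz⟩))))
      (fun η h0 => by
        exact Subtype.ext (hsepR (i - 1) (j + 1) h' η η.2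
          (fun z hz => hcL0 _ (h0 ⟨z, hz⟩))))
    obtain ⟨w', hw'⟩ := hBsurj ψ
    set ε : ℝ := (-1 : ℝ) ^ (i - 1) with hε
    have hu : d (w' : A) ∈ 𝒜 i := by
      have h3 := hd (i - 1) (w' : A) w'.2
      have h4 : i - 1 + 1 = i := by omega
      rwa [h4] at h3
    have hε2 : ε * ε = 1 := by
      rcases neg_one_pow_eq_or ℝ (i - 1) with h | h <;> rw [hε, h] <;> norm_num
    have hwdy : ∀ y : ↥(𝒜 j), (w' : A) * d (y : A) = -(ε • (d (w' : A) * (y : A))) := by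
      intro y
      have hwy : (w' : A) * (y : A) ∈ 𝒜 (n - 1) := by
        have hm := SetLike.mul_mem_graded w'.2 y.2
        have he2 : (i - 1) + j = n - 1 := by omega
        rwa [he2] at hm
      have hlb := hleib (i - 1) (w' : A) (y : A) w'.2
      rw [hdn _ hwy, hcast] at hlb
      have h1 : ε • ((w' : A) * d (y : A)) = -(d (w' : A) * (y : A)) := by
        rw [eq_neg_iff_add_eq_zero, add_comm]
        exact hlb.symm
      calc (w' : A) * d (y : A) = (ε * ε) • ((w' : A) * d (y : A)) := by
            rw [hε2, one_smul]
        _ = ε • (ε • ((w' : A) * d (y : A))) := by rw [mul_smul]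
        _ = ε • (-(d (w' : A) * (y : A))) := by rw [h1]
        _ = -(ε • (d (w' : A) * (y : A))) := by rw [smul_neg]
    have hkill : ∀ y ∈ 𝒜 j, (x + ε • d (w' : A)) * y = 0 := by
      intro y hy
      have hu' := hu
      have pf_xy : x * y ∈ 𝒜 n := by rw [← hij]; exact SetLike.mul_mem_graded hx hy
      have pf_uy : d (w' : A) * y ∈ 𝒜 n := by
        rw [← hij]; exact SetLike.mul_mem_graded hu hy
      have pf_wdy : (w' : A) * d y ∈ 𝒜 n := by
        rw [← h']; exact SetLike.mul_mem_graded w'.2 (hd j y hy)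
      have hmem : (x + ε • d (w' : A)) * y ∈ 𝒜 n := by
        rw [← hij]
        exact SetLike.mul_mem_graded (add_mem hx (Submodule.smul_mem _ _ hu)) hy
      have hxyrep : cL ⟨x * y, pf_xy⟩ = cL ⟨(w' : A) * d y, pf_wdy⟩ := by
        have h1 := hψ ⟨y, hy⟩
        rw [← hw'] at h1
        exact h1.symm
      have hsplit : (⟨(x + ε • d (w' : A)) * y, hmem⟩ : ↥(𝒜 n)) =
          ⟨x * y, pf_xy⟩ + ε • ⟨d (w' : A) * y, pf_uy⟩ := by
        apply Subtype.ext
        simp [add_mul, smul_mul_assoc]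
      have hneg : (⟨(w' : A) * d y, pf_wdy⟩ : ↥(𝒜 n)) =
          -(ε • ⟨d (w' : A) * y, pf_uy⟩) := by
        apply Subtype.ext
        simpa using hwdy ⟨y, hy⟩
      have hz : cL ⟨(x + ε • d (w' : A)) * y, hmem⟩ = 0 := by
        rw [hsplit, map_add, map_smul, hxyrep, hneg, map_neg, map_smul]
        simp
      have hval := hcLspec ⟨(x + ε • d (w' : A)) * y, hmem⟩
      rw [hz, zero_smul] at hval
      exact hval
    have hx0 : x + ε • d (w' : A) = 0 :=
      hsepL i j hij _ (add_mem hx (Submodule.smul_mem _ _ hu)) hkill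
    refine ⟨(-ε) • (w' : A), Submodule.smul_mem _ _ w'.2, ?_⟩
    rw [map_smul]
    have hxe : x = -(ε • d (w' : A)) := by rwa [add_eq_zero_iff_eq_neg] at hx0
    rw [hxe, neg_smul]
  -- projection argument for `[1] ≠ 0`
  have hproj0 : ∀ a : A, (DirectSum.decompose 𝒜 (d a) 0 : A) = 0 := by
    intro a
    refine DirectSum.Decomposition.inductionOn 𝒜 (motive := fun a : A => (DirectSum.decompose 𝒜 (d a) 0 : A) = 0) ?_ ?_ ?_ a
    · simp
    · intro i m
      exact DirectSum.decompose_of_mem_ne 𝒜 (hd i (m : A) m.2) (Nat.succ_ne_zero i)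
    · intro m m' hm hm'
      rw [map_add, DirectSum.decompose_add, DirectSum.add_apply, Submodule.coe_add, hm, hm',
        add_zero]
  refine ⟨⟨?_, fun x hx => hzero x ((Submodule.mem_inf.1 hx).1)⟩, ⟨?_, ?_⟩, ?_⟩
  · -- `1 ∉ range d`
    intro hm
    obtain ⟨a, ha⟩ := hm
    have h0 := hproj0 a
    rw [ha, DirectSum.decompose_of_mem_same 𝒜 hone0] at h0
    exact hone h0
  · -- `[v] ≠ 0`
    intro hvm
    exact hvne (hmap0 v hvm)
  · -- `Hⁿ` spanned by `[v]`
    intro x hx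
    obtain ⟨c, hc⟩ := hvspan x (Submodule.mem_inf.1 hx).1
    exact ⟨c, by rw [hc, sub_self]; exact Submodule.zero_mem _⟩
  · -- non-degeneracy in cohomology
    intro i hi hin
    constructor
    · intro x hx hnb
      obtain ⟨hx1, hx2⟩ := Submodule.mem_inf.1 hx
      by_contra hcon
      push_neg at hcon
      apply hnb
      apply key i (n - i) hi (by omega) x hx1
      intro y hy hdy
      exact hmap0 _ (hcon y (Submodule.mem_inf.2 ⟨hy, LinearMap.mem_ker.2 hdy⟩))
    · intro y hy hnb
      obtain ⟨hy1, hy2⟩ := Submodule.mem_inf.1 hy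
      by_contra hcon
      push_neg at hcon
      apply hnb
      apply key (n - i) i (by omega) (by omega) y hy1
      intro z hz hdz
      have h0 : z * y = 0 :=
        hmap0 _ (hcon z (Submodule.mem_inf.2 ⟨hz, LinearMap.mem_ker.2 hdz⟩))
      rw [hcomm (n - i) i y z hy1 hz, h0, smul_zero]
end

section
/- Let A* be a bounded filtered DGA such that H*(A) is a finite-dimensional graded algebra of n-PD-type and, for some s, the total complex (Tot* E_s^{•,•}(A), d_s) of the E_s spectral sequence page is a finite-dimensional graded algebra of n-PD-type. Then for every r ≥ s, the total complex of the E_r-page is a graded algebra of n-PD-type. -/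
def IsPDType (n : ℕ) (V : ℕ → Type) [∀ k, AddCommGroup (V k)] [∀ k, Module ℝ (V k)]
    (m : ∀ i j, V i →ₗ[ℝ] V j →ₗ[ℝ] V (i + j)) : Prop :=
  (∀ k, FiniteDimensional ℝ (V k)) ∧
  (∃ one : V 0, one ≠ 0 ∧ (∀ x : V 0, ∃ c : ℝ, x = c • one) ∧
    ∀ (i : ℕ) (x : V i), m i 0 x one = x) ∧
  (∀ k, n < k → Subsingleton (V k)) ∧
  (∃ v : V n, v ≠ 0 ∧ ∀ x : V n, ∃ c : ℝ, x = c • v) ∧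
  (∀ i, 0 < i → i < n → ∀ x : V i, x ≠ 0 → ∃ y : V (n - i), m i (n - i) x y ≠ 0)

section CastL
variable {V : ℕ → Type} [∀ k, AddCommGroup (V k)] [∀ k, Module ℝ (V k)]

def castL {a b : ℕ} (h : a = b) : V a →ₗ[ℝ] V b where
  toFun x := h ▸ x
  map_add' x y := by subst h; rfl
  map_smul' c x := by subst h; rfl

lemma castL_refl {a : ℕ} (h : a = a) (x : V a) : castL h x = x := rfl

lemma cast_eq_castL {a b : ℕ} (h : a = b) (x : V a) :
    cast (congrArg V h) x = castL h x := by subst h; rfl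

lemma castL_eq_zero {a b : ℕ} (h : a = b) (x : V a) : castL h x = 0 ↔ x = 0 := by
  subst h; exact Iff.rfl

lemma castL_castL {a b c : ℕ} (h1 : a = b) (h2 : b = c) (x : V a) :
    castL h2 (castL (V := V) h1 x) = castL (h1.trans h2) x := by subst h1; subst h2; rfl

lemma sign_cases (k : ℕ) : ((-1 : ℤ) ^ k) = 1 ∨ ((-1 : ℤ) ^ k) = -1 := by
  rcases Nat.even_or_odd k with h | h
  · exact Or.inl h.neg_one_pow
  · exact Or.inr h.neg_one_pow

end CastL

section Key

variable (V : ℕ → Type) [∀ k, AddCommGroup (V k)] [∀ k, Module ℝ (V k)]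
  (d : ∀ k, V k →ₗ[ℝ] V (k + 1)) (mV : ∀ i j, V i →ₗ[ℝ] V j →ₗ[ℝ] V (i + j))

open Module LinearMap

lemma key
    (hcomm : ∀ i j (x : V i) (y : V j),
      mV i j x y = castL (Nat.add_comm j i) (((-1 : ℤ) ^ (i * j)) • mV j i y x))
    (hleib : ∀ i j (x : V i) (y : V j),
      d (i + j) (mV i j x y) =
        castL (Nat.add_right_comm i 1 j) (mV (i + 1) j (d i x) y) +
          ((-1 : ℤ) ^ i) • castL (Nat.add_assoc i j 1).symm
            (mV i (j + 1) x (d j y)))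
    (n : ℕ) (hPD : IsPDType n V mV)
    (hvan : ∀ c, c + 1 = n → ∀ z : V c, d c z = 0)
    (a b : ℕ) (hn : a + 1 + b = n) (hb : 0 < b)
    (x : V (a + 1)) (hx : x ∉ LinearMap.range (d a)) :
    ∃ y : V b, d b y = 0 ∧ mV (a + 1) b x y ≠ 0 := by
  obtain ⟨hfd, ⟨one, hone0, honespan, honeunit⟩, hhigh, ⟨v, hv0, hvspan⟩, hdual⟩ := hPD
  haveI : FiniteDimensional ℝ (V a) := hfd _
  haveI : FiniteDimensional ℝ (V (a + 1)) := hfd _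
  haveI : FiniteDimensional ℝ (V b) := hfd _
  haveI : FiniteDimensional ℝ (V (b + 1)) := hfd _
  haveI : FiniteDimensional ℝ (V n) := hfd _
  -- generic cast-product lemma
  have m_castR : ∀ (i : ℕ) {j j' : ℕ} (h : j = j') (x : V i) (y : V j),
      mV i j' x (castL h y) = castL (congrArg (i + ·) h) (mV i j x y) := by
    intro i j j' h x y; subst h; rw [castL_refl, castL_refl]
  -- nonvanishing flip
  have m_comm_ne : ∀ i j (x : V i) (y : V j), mV i j x y ≠ 0 ↔ mV j i y x ≠ 0 := by
    intro i j x y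
    rw [hcomm i j x y]
    simp only [Ne, castL_eq_zero]
    rcases sign_cases (i * j) with h | h <;> rw [h]
    · rw [one_smul]
    · rw [neg_one_zsmul, neg_eq_zero]
  -- the top class gives an equivalence with ℝ
  have hvinj : Function.Injective (LinearMap.toSpanSingleton ℝ (V n) v) := by
    intro c1 c2 h
    simp only [LinearMap.toSpanSingleton_apply] at h
    by_contra hne
    have : (c1 - c2) • v = 0 := by rw [sub_smul, h, sub_self]
    rcases smul_eq_zero.mp this with h' | h'
    · exact hne (by linarith [sub_eq_zero.mp (by linarith [h'] : c1 - c2 = 0)])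
    · exact hv0 h'
  have hvsurj : Function.Surjective (LinearMap.toSpanSingleton ℝ (V n) v) := by
    intro z; obtain ⟨c, hc⟩ := hvspan z
    exact ⟨c, by rw [LinearMap.toSpanSingleton_apply, hc]⟩
  let e : ℝ ≃ₗ[ℝ] V n := LinearEquiv.ofBijective _ ⟨hvinj, hvsurj⟩
  let f : V n ≃ₗ[ℝ] ℝ := e.symm
  have hf0 : ∀ z : V n, f z = 0 ↔ z = 0 := fun z => f.map_eq_zero_iff
  -- pairings
  have hP1 : a + 1 + b = n := hn
  have hP2 : a + (b + 1) = n := by omega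
  have hP3 : b + 1 + a = n := by omega
  have hP4 : b + (a + 1) = n := by omega
  let P : ∀ c e, c + e = n → (V c →ₗ[ℝ] V e →ₗ[ℝ] ℝ) := fun c e h =>
    (mV c e).compr₂ (f.toLinearMap ∘ₗ castL h)
  have Papp : ∀ c e (h : c + e = n) (x : V c) (y : V e),
      P c e h x y = f (castL h (mV c e x y)) := fun _ _ _ _ _ => rfl
  -- general injectivity of pairings in the first variable
  have injAll : ∀ c e (h : c + e = n), 0 < c → Function.Injective (P c e h) := by
    intro c e h hc
    rw [← LinearMap.ker_eq_bot]
    rw [LinearMap.ker_eq_bot']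
    intro x hx0
    by_contra hxne
    have : ∃ y : V e, mV c e x y ≠ 0 := by
      rcases Nat.eq_zero_or_pos e with he | he
      · subst he
        exact ⟨one, by rw [honeunit c x]; exact hxne⟩
      · obtain ⟨y0, hy0⟩ := hdual c hc (by omega) x hxne
        have hnc : n - c = e := by omega
        refine ⟨castL hnc y0, ?_⟩
        rw [m_castR]
        rw [Ne, castL_eq_zero]
        exact hy0
    obtain ⟨y, hy⟩ := this
    have : P c e h x y = 0 := by rw [hx0]; rfl
    rw [Papp] at this
    rw [hf0, castL_eq_zero] at this
    exact hy this
  -- Stokes formula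
  have stokes : ∀ (i j : ℕ) (hij : i + j + 1 = n) (h1 : i + 1 + j = n) (h2 : i + (j + 1) = n)
      (u : V i) (y : V j),
      P (i + 1) j h1 (d i u) y + ((-1 : ℤ) ^ i) • P i (j + 1) h2 u (d j y) = 0 := by
    intro i j hij h1 h2 u y
    have h0 : d (i + j) (mV i j u y) = 0 := hvan (i + j) hij _
    have hl := hleib i j u y
    rw [h0] at hl
    have key0 : f (castL hij ((0 : V (i + j + 1)))) = 0 := by rw [map_zero, map_zero]
    rw [hl] at key0
    simp only [map_add, map_zsmul, castL_castL] at key0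
    rw [Papp, Papp]
    exact key0
  -- rank equality
  have hrk : finrank ℝ (LinearMap.range (d a)) = finrank ℝ (LinearMap.range (d b)) := by
    have fwd : ∀ (p q : ℕ) (hpq : p + q + 1 = n) (g1 : p + 1 + q = n) (g2 : p + (q + 1) = n),
        0 < p + 1 →
        finrank ℝ (LinearMap.range (d p)) ≤ finrank ℝ (LinearMap.range (d q)) := by
      intro p q hpq g1 g2 hp
      haveI : FiniteDimensional ℝ (V p) := hfd _
      haveI : FiniteDimensional ℝ (V (p + 1)) := hfd _
      haveI : FiniteDimensional ℝ (V q) := hfd _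
      haveI : FiniteDimensional ℝ (V (q + 1)) := hfd _
      set C : V p →ₗ[ℝ] Module.Dual ℝ (V q) := (P (p + 1) q g1).comp (d p) with hC
      have hCrank : finrank ℝ (LinearMap.range C) = finrank ℝ (LinearMap.range (d p)) := by
        rw [hC, LinearMap.range_comp]
        exact LinearEquiv.finrank_eq
          (Submodule.equivMapOfInjective _ (injAll (p + 1) q g1 hp) _).symm
      have hCle : LinearMap.range C ≤ LinearMap.range ((d q).dualMap) := by
        rintro _ ⟨u, rfl⟩
        refine ⟨(-(-1 : ℤ) ^ p) • P p (q + 1) g2 u, ?_⟩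
        ext y
        have hst := stokes p q hpq g1 g2 u y
        have : P (p + 1) q g1 ((d p) u) y = -(((-1 : ℤ) ^ p) • P p (q + 1) g2 u ((d q) y)) :=
          eq_neg_of_add_eq_zero_left hst
        simp only [LinearMap.dualMap_apply, hC, LinearMap.comp_apply]
        rw [this]
        simp
      calc finrank ℝ (LinearMap.range (d p)) = finrank ℝ (LinearMap.range C) := hCrank.symm
        _ ≤ finrank ℝ (LinearMap.range ((d q).dualMap)) := Submodule.finrank_mono hCle
        _ = finrank ℝ (LinearMap.range (d q)) :=
            LinearMap.finrank_range_dualMap_eq_finrank_range (d q)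
    exact le_antisymm (fwd a b (by omega) hP1 hP2 (Nat.succ_pos a))
      (fwd b a (by omega) hP3 hP4 (Nat.succ_pos b))
  -- the annihilator of the closed forms
  set A := Submodule.dualAnnihilator (LinearMap.ker (d b)) with hA
  have hsub : LinearMap.range (d a) ≤ Submodule.comap (P (a + 1) b hP1) A := by
    rintro _ ⟨u, rfl⟩
    rw [Submodule.mem_comap, hA, Submodule.mem_dualAnnihilator]
    intro y hy
    have hst := stokes a b (by omega) hP1 hP2 u y
    rw [LinearMap.mem_ker] at hy
    rw [hy] at hst
    simpa using hst
  -- P (a+1) b is bijective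
  have frab : finrank ℝ (V (a + 1)) = finrank ℝ (V b) := by
    have le1 : finrank ℝ (V (a + 1)) ≤ finrank ℝ (Module.Dual ℝ (V b)) :=
      LinearMap.finrank_le_finrank_of_injective (injAll (a + 1) b hP1 (Nat.succ_pos a))
    have le2 : finrank ℝ (V b) ≤ finrank ℝ (Module.Dual ℝ (V (a + 1))) :=
      LinearMap.finrank_le_finrank_of_injective (injAll b (a + 1) hP4 hb)
    rw [Subspace.dual_finrank_eq] at le1 le2
    omega
  have hPsurj : Function.Surjective (P (a + 1) b hP1) := by
    refine (LinearMap.injective_iff_surjective_of_finrank_eq_finrank ?_).mp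
      (injAll (a + 1) b hP1 (Nat.succ_pos a))
    rw [Subspace.dual_finrank_eq]; exact frab
  set E : V (a + 1) ≃ₗ[ℝ] Module.Dual ℝ (V b) :=
    LinearEquiv.ofBijective (P (a + 1) b hP1) ⟨injAll (a + 1) b hP1 (Nat.succ_pos a), hPsurj⟩
    with hE
  have hcomapfr : finrank ℝ (Submodule.comap (P (a + 1) b hP1) A) = finrank ℝ A := by
    have : Submodule.comap (P (a + 1) b hP1) A = Submodule.comap (E : V (a+1) →ₗ[ℝ] _) A := rfl
    rw [this, Submodule.comap_equiv_eq_map_symm]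
    exact LinearEquiv.finrank_map_eq _ _
  have hAfr : finrank ℝ A = finrank ℝ (LinearMap.range (d b)) := by
    have e1 : finrank ℝ (V b ⧸ LinearMap.ker (d b)) = finrank ℝ A :=
      (Subspace.quotEquivAnnihilator (LinearMap.ker (d b))).finrank_eq
    rw [← e1]
    have e2 := Submodule.finrank_quotient_add_finrank (LinearMap.ker (d b))
    have e3 := LinearMap.finrank_range_add_finrank_ker (d b)
    omega
  have heq : LinearMap.range (d a) = Submodule.comap (P (a + 1) b hP1) A :=
    Submodule.eq_of_le_of_finrank_le hsub (by rw [hcomapfr, hAfr, ← hrk])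
  -- conclude
  have hxnot : P (a + 1) b hP1 x ∉ A := by
    intro hmem
    exact hx (heq ▸ Submodule.mem_comap.mpr hmem)
  rw [hA, Submodule.mem_dualAnnihilator] at hxnot
  push_neg at hxnot
  obtain ⟨y, hyk, hyne⟩ := hxnot
  refine ⟨y, LinearMap.mem_ker.mp hyk, fun h0 => hyne ?_⟩
  rw [Papp, h0, map_zero, map_zero]

end Key

section Page

open Module LinearMap

lemma page_step
    (V W : ℕ → Type) [∀ k, AddCommGroup (V k)] [∀ k, Module ℝ (V k)]
    [∀ k, AddCommGroup (W k)] [∀ k, Module ℝ (W k)]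
    (d : ∀ k, V k →ₗ[ℝ] V (k + 1)) (mV : ∀ i j, V i →ₗ[ℝ] V j →ₗ[ℝ] V (i + j))
    (mW : ∀ i j, W i →ₗ[ℝ] W j →ₗ[ℝ] W (i + j))
    (hcomm : ∀ i j (x : V i) (y : V j),
      mV i j x y = castL (Nat.add_comm j i) (((-1 : ℤ) ^ (i * j)) • mV j i y x))
    (hleib : ∀ i j (x : V i) (y : V j),
      d (i + j) (mV i j x y) =
        castL (Nat.add_right_comm i 1 j) (mV (i + 1) j (d i x) y) +
          ((-1 : ℤ) ^ i) • castL (Nat.add_assoc i j 1).symm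
            (mV i (j + 1) x (d j y)))
    (hmker : ∀ i j (x : V i) (y : V j), x ∈ LinearMap.ker (d i) →
      y ∈ LinearMap.ker (d j) → mV i j x y ∈ LinearMap.ker (d (i + j)))
    (B : ∀ k, Submodule ℝ (V k)) (hB0 : B 0 = ⊥)
    (hB : ∀ k, B (k + 1) = LinearMap.range (d k))
    (π : ∀ k, LinearMap.ker (d k) →ₗ[ℝ] W k)
    (hπs : ∀ k, Function.Surjective (π k))
    (hπ0 : ∀ k (z : LinearMap.ker (d k)), π k z = 0 ↔ (z : V k) ∈ B k)
    (hπm : ∀ i j (x : LinearMap.ker (d i)) (y : LinearMap.ker (d j))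
      (h : mV i j x y ∈ LinearMap.ker (d (i + j))),
      mW i j (π i x) (π j y) = π (i + j) ⟨mV i j (x : V i) (y : V j), h⟩)
    (n : ℕ) (hPD : IsPDType n V mV)
    (hvan : ∀ c, c + 1 = n → ∀ z : V c, d c z = 0) :
    IsPDType n W mW := by
  obtain ⟨hfd, ⟨one, hone0, honespan, honeunit⟩, hhigh, ⟨v, hv0, hvspan⟩, hdual⟩ := id hPD
  -- the unit is closed
  have hone_d : d 0 one = 0 := by
    have h1' : d 0 (mV 0 0 one one) =
        mV (0 + 1) 0 (d 0 one) one + ((-1 : ℤ) ^ 0) • mV 0 (0 + 1) one (d 0 one) :=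
      hleib 0 0 one one
    rw [honeunit 0 one] at h1'
    rw [honeunit (0 + 1) (d 0 one)] at h1'
    have h2 : mV 0 (0 + 1) one (d 0 one) =
        ((-1 : ℤ) ^ (0 * (0 + 1))) • mV (0 + 1) 0 (d 0 one) one :=
      hcomm 0 (0 + 1) one (d 0 one)
    rw [honeunit (0 + 1) (d 0 one)] at h2
    rw [h2] at h1'
    simp only [pow_zero, one_smul, Nat.zero_mul, Nat.mul_zero, mul_zero, zero_mul] at h1'
    -- h1' : d 0 one = d 0 one + d 0 one
    have := left_eq_add.mp h1'
    exact this
  have honeK : one ∈ LinearMap.ker (d 0) := LinearMap.mem_ker.mpr hone_d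
  have hone'0 : π 0 ⟨one, honeK⟩ ≠ 0 := by
    intro h
    have := (hπ0 0 _).mp h
    rw [hB0] at this
    exact hone0 (by simpa using this)
  have hone'span : ∀ x : W 0, ∃ c : ℝ, x = c • π 0 ⟨one, honeK⟩ := by
    intro x; obtain ⟨z, rfl⟩ := hπs 0 x
    obtain ⟨c, hc⟩ := honespan z.1
    refine ⟨c, ?_⟩
    have hz : z = c • (⟨one, honeK⟩ : LinearMap.ker (d 0)) := Subtype.ext (by simpa using hc)
    rw [hz, map_smul]
  have hone'unit : ∀ i (x : W i), mW i 0 x (π 0 ⟨one, honeK⟩) = x := by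
    intro i x; obtain ⟨z, rfl⟩ := hπs i x
    have hm : mV i 0 z.1 one ∈ LinearMap.ker (d (i + 0)) := by
      rw [honeunit i z.1]; exact z.2
    rw [hπm i 0 z ⟨one, honeK⟩ hm]
    have hz : (⟨mV i 0 z.1 one, hm⟩ : LinearMap.ker (d (i + 0))) = z :=
      Subtype.ext (honeunit i z.1)
    rw [hz]
    rfl
  have hsing : ∀ k, n < k → Subsingleton (W k) := by
    intro k hk
    haveI := hhigh k hk
    have hz : ∀ w : W k, w = 0 := by
      intro w; obtain ⟨z, rfl⟩ := hπs k w
      have : z = 0 := Subtype.ext (Subsingleton.elim _ _)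
      rw [this, map_zero]
    exact ⟨fun a b => by rw [hz a, hz b]⟩
  have hc45 : (∃ v' : W n, v' ≠ 0 ∧ ∀ x : W n, ∃ c : ℝ, x = c • v') ∧
      (∀ i, 0 < i → i < n → ∀ x : W i, x ≠ 0 →
        ∃ y : W (n - i), mW i (n - i) x y ≠ 0) := by
    rcases Nat.eq_zero_or_pos n with hn0 | hnpos
    · subst hn0
      exact ⟨⟨π 0 ⟨one, honeK⟩, hone'0, hone'span⟩, fun i h0 hi => absurd hi (by omega)⟩
    · obtain ⟨c0, rfl⟩ : ∃ c0, n = c0 + 1 := ⟨n - 1, by omega⟩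
      have hBtop : ∀ (N : ℕ), N = c0 + 1 → ∀ z : V N, z ∈ B N → z = 0 := by
        intro N hN; subst hN
        intro z hz
        rw [hB c0] at hz
        obtain ⟨u, rfl⟩ := hz
        exact hvan c0 rfl u
      haveI := hhigh (c0 + 1 + 1) (by omega)
      have hvK : v ∈ LinearMap.ker (d (c0 + 1)) :=
        LinearMap.mem_ker.mpr (Subsingleton.elim _ _)
      constructor
      · refine ⟨π (c0 + 1) ⟨v, hvK⟩, ?_, ?_⟩
        · intro h
          exact hv0 (hBtop _ rfl _ ((hπ0 _ _).mp h))
        · intro x; obtain ⟨z, rfl⟩ := hπs (c0 + 1) x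
          obtain ⟨c, hc⟩ := hvspan z.1
          refine ⟨c, ?_⟩
          have hz : z = c • (⟨v, hvK⟩ : LinearMap.ker (d (c0 + 1))) :=
            Subtype.ext (by simpa using hc)
          rw [hz, map_smul]
      · intro i h0 hi x' hx'
        obtain ⟨x, rfl⟩ := hπs i x'
        have hxB : (x : V i) ∉ B i := fun hmem => hx' ((hπ0 i x).mpr hmem)
        obtain ⟨a, rfl⟩ : ∃ a, i = a + 1 := ⟨i - 1, by omega⟩
        rw [hB a] at hxB
        obtain ⟨y, hyd, hyne⟩ :=
          key V d mV hcomm hleib (c0 + 1) hPD hvan a ((c0 + 1) - (a + 1))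
            (by omega) (by omega) x.1 hxB
        have hyK : y ∈ LinearMap.ker (d ((c0 + 1) - (a + 1))) := LinearMap.mem_ker.mpr hyd
        have hmxy : mV (a + 1) ((c0 + 1) - (a + 1)) x.1 y ∈
            LinearMap.ker (d ((a + 1) + ((c0 + 1) - (a + 1)))) := hmker _ _ _ _ x.2 hyK
        refine ⟨π _ ⟨y, hyK⟩, ?_⟩
        rw [hπm _ _ x ⟨y, hyK⟩ hmxy]
        intro h0'
        rw [hπ0] at h0'
        exact hyne (hBtop _ (by omega) _ h0')
  haveI : ∀ k, FiniteDimensional ℝ (V k) := hfd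
  refine ⟨fun k => ?_, ⟨π 0 ⟨one, honeK⟩, hone'0, hone'span, hone'unit⟩, hsing, hc45.1, hc45.2⟩
  haveI : FiniteDimensional ℝ (V k) := hfd k
  exact Module.Finite.of_surjective (π k) (hπs k)

end Page

/-- Let `A*` be a bounded filtered DGA whose cohomology `H*(A)` is a finite-dimensional
graded algebra of `n`-PD-type, and suppose that for some `s` the total complex
`(Tot* E_s, d_s)` of the `E_s`-page of the associated (multiplicative) spectral sequence is
a finite-dimensional graded algebra of `n`-PD-type.  Then for every `r ≥ s` the total
complex of the `E_r`-page is a graded algebra of `n`-PD-type.  The spectral sequence is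
given by its totalized pages `T r` with degree-`1` differentials `d r` (derivations for the
page products `m r`, graded commutative), coboundary submodules `B r`, and isomorphisms
`T (r+1) k ≅ ker (d r k) ⧸ B r k` compatible with the products; convergence to `H*(A)` is
expressed by linear isomorphisms `T r k ≅ H k` for all large `r`. -/
theorem stmt_13 (n s : ℕ)
    (T : ℕ → ℕ → Type)
    [∀ r k, AddCommGroup (T r k)] [∀ r k, Module ℝ (T r k)]
    (d : ∀ r k, T r k →ₗ[ℝ] T r (k + 1))
    (hdd : ∀ r k, (d r (k + 1)).comp (d r k) = 0)
    (B : ∀ r k, Submodule ℝ (T r k))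
    (hB0 : ∀ r, B r 0 = ⊥)
    (hB : ∀ r k, B r (k + 1) = LinearMap.range (d r k))
    (hBZ : ∀ r k, B r k ≤ LinearMap.ker (d r k))
    -- the products on the pages
    (m : ∀ r i j, T r i →ₗ[ℝ] T r j →ₗ[ℝ] T r (i + j))
    (hcomm : ∀ r i j (x : T r i) (y : T r j),
      m r i j x y = cast (congrArg (T r) (Nat.add_comm j i))
        (((-1 : ℤ) ^ (i * j)) • m r j i y x))
    (hleib : ∀ r i j (x : T r i) (y : T r j),
      d r (i + j) (m r i j x y) =
        cast (congrArg (T r) (by omega : i + 1 + j = i + j + 1))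
            (m r (i + 1) j (d r i x) y) +
          ((-1 : ℤ) ^ i) • cast (congrArg (T r) (by omega : i + (j + 1) = i + j + 1))
            (m r i (j + 1) x (d r j y)))
    (hmker : ∀ r i j (x : T r i) (y : T r j), x ∈ LinearMap.ker (d r i) →
      y ∈ LinearMap.ker (d r j) → m r i j x y ∈ LinearMap.ker (d r (i + j)))
    -- each page is the cohomology of the previous one, multiplicatively
    (iso : ∀ r k, T (r + 1) k ≃ₗ[ℝ]
      (LinearMap.ker (d r k) ⧸ (B r k).comap (LinearMap.ker (d r k)).subtype))
    (hiso : ∀ r i j (x : LinearMap.ker (d r i)) (y : LinearMap.ker (d r j)),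
      (iso r (i + j)).symm (Submodule.Quotient.mk
          (⟨m r i j x y, hmker r i j x y x.2 y.2⟩ : LinearMap.ker (d r (i + j)))) =
        m (r + 1) i j ((iso r i).symm (Submodule.Quotient.mk x))
          ((iso r j).symm (Submodule.Quotient.mk y)))
    -- the abutment `H*(A)` is of `n`-PD-type
    (H : ℕ → Type) [∀ k, AddCommGroup (H k)] [∀ k, Module ℝ (H k)]
    (mH : ∀ i j, H i →ₗ[ℝ] H j →ₗ[ℝ] H (i + j))
    (hH : IsPDType n H mH)
    -- convergence (boundedness): for large `r` the pages stabilize to the graded of `H*(A)`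
    (hconv : ∃ r₀ : ℕ, s ≤ r₀ ∧ ∀ r, r₀ ≤ r → ∀ k, Nonempty (T r k ≃ₗ[ℝ] H k))
    -- `Tot* E_s` is a finite-dimensional graded algebra of `n`-PD-type
    (hs : IsPDType n (T s) (m s)) :
    ∀ r, s ≤ r → IsPDType n (T r) (m r) := by
  obtain ⟨r₀, hr₀s, hconv'⟩ := hconv
  have hcomm' : ∀ r i j (x : T r i) (y : T r j),
      m r i j x y = castL (Nat.add_comm j i) (((-1 : ℤ) ^ (i * j)) • m r j i y x) := by
    intro r i j x y; rw [hcomm r i j x y, cast_eq_castL]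
  have hleib' : ∀ r i j (x : T r i) (y : T r j),
      d r (i + j) (m r i j x y) =
        castL (by omega : i + 1 + j = i + j + 1) (m r (i + 1) j (d r i x) y) +
          ((-1 : ℤ) ^ i) • castL (by omega : i + (j + 1) = i + j + 1)
            (m r i (j + 1) x (d r j y)) := by
    intro r i j x y; rw [hleib r i j x y, cast_eq_castL, cast_eq_castL]
  have hπs : ∀ r k, Function.Surjective
      ((iso r k).symm.toLinearMap.comp
        ((B r k).comap (LinearMap.ker (d r k)).subtype).mkQ) := by
    intro r k
    exact (iso r k).symm.surjective.comp (Submodule.mkQ_surjective _)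
  have hπ0 : ∀ r k (z : LinearMap.ker (d r k)),
      ((iso r k).symm.toLinearMap.comp
        ((B r k).comap (LinearMap.ker (d r k)).subtype).mkQ) z = 0 ↔
      (z : T r k) ∈ B r k := by
    intro r k z
    rw [LinearMap.comp_apply]
    constructor
    · intro h
      have h2 : ((B r k).comap (LinearMap.ker (d r k)).subtype).mkQ z = 0 :=
        (iso r k).symm.injective (by simpa using h)
      rw [Submodule.mkQ_apply, Submodule.Quotient.mk_eq_zero] at h2
      simpa [Submodule.mem_comap] using h2
    · intro h
      have h2 : ((B r k).comap (LinearMap.ker (d r k)).subtype).mkQ z = 0 := by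
        rw [Submodule.mkQ_apply, Submodule.Quotient.mk_eq_zero]
        exact Submodule.mem_comap.mpr (by simpa using h)
      show (iso r k).symm _ = 0
      rw [h2, map_zero]
  have hπm : ∀ r i j (x : LinearMap.ker (d r i)) (y : LinearMap.ker (d r j))
      (h : m r i j x y ∈ LinearMap.ker (d r (i + j))),
      m (r+1) i j
        (((iso r i).symm.toLinearMap.comp
          ((B r i).comap (LinearMap.ker (d r i)).subtype).mkQ) x)
        (((iso r j).symm.toLinearMap.comp
          ((B r j).comap (LinearMap.ker (d r j)).subtype).mkQ) y) =
      ((iso r (i + j)).symm.toLinearMap.comp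
          ((B r (i + j)).comap (LinearMap.ker (d r (i + j))).subtype).mkQ)
        ⟨m r i j (x : T r i) (y : T r j), h⟩ := by
    intro r i j x y h
    exact (hiso r i j x y).symm
  have hsub : ∀ k r r', r ≤ r' → Subsingleton (T r k) → Subsingleton (T r' k) := by
    intro k r r' hrr' hs0
    induction r', hrr' using Nat.le_induction with
    | base => exact hs0
    | succ r' hr' ih =>
      haveI := ih
      haveI : Subsingleton (LinearMap.ker (d r' k)) :=
        ⟨fun a b => Subtype.ext (Subsingleton.elim _ _)⟩
      haveI : Subsingleton
          ((LinearMap.ker (d r' k)) ⧸ ((B r' k).comap (LinearMap.ker (d r' k)).subtype)) := by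
        rw [Submodule.Quotient.subsingleton_iff, Submodule.eq_top_iff']
        intro x
        have hx0 : x = 0 := Subsingleton.elim _ _
        rw [hx0]
        exact Submodule.zero_mem _
      exact (iso r' k).toEquiv.subsingleton
  suffices hstep : ∀ p, IsPDType n (T p) (m p) → IsPDType n (T (p + 1)) (m (p + 1)) by
    intro r hr
    obtain ⟨t, rfl⟩ : ∃ t, r = s + t := ⟨r - s, by omega⟩
    clear hr
    induction t with
    | zero => exact hs
    | succ t ih => exact hstep (s + t) ih
  intro p hPDp
  have hvan : ∀ c, c + 1 = n → ∀ z : T p c, d p c z = 0 := by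
    intro c hc z
    by_contra hz
    obtain ⟨v, hv0, hvspan⟩ := hPDp.2.2.2.1
    have hw : castL hc (d p c z) ≠ 0 := by rw [Ne, castL_eq_zero]; exact hz
    have hwB : castL hc (d p c z) ∈ B p n := by
      have hgen : ∀ N (hN : c + 1 = N), castL (V := T p) hN (d p c z) ∈ B p N := by
        intro N hN; subst hN
        rw [hB p c]
        exact ⟨z, (castL_refl _ _).symm⟩
      exact hgen n hc
    obtain ⟨cv, hcv⟩ := hvspan (castL hc (d p c z))
    have hcv0 : cv ≠ 0 := by
      rintro rfl
      rw [zero_smul] at hcv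
      exact hw hcv
    have hvB : v ∈ B p n := by
      have hv' : v = cv⁻¹ • (castL hc (d p c z)) := by
        rw [hcv, smul_smul, inv_mul_cancel₀ hcv0, one_smul]
      rw [hv']
      exact Submodule.smul_mem _ _ hwB
    haveI hQsing : Subsingleton
        ((LinearMap.ker (d p n)) ⧸ ((B p n).comap (LinearMap.ker (d p n)).subtype)) := by
      rw [Submodule.Quotient.subsingleton_iff, Submodule.eq_top_iff']
      intro x
      obtain ⟨cx, hcx⟩ := hvspan x.1
      rw [Submodule.mem_comap]
      show (x : T p n) ∈ B p n
      rw [hcx]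
      exact Submodule.smul_mem _ _ hvB
    haveI : Subsingleton (T (p + 1) n) := (iso p n).toEquiv.subsingleton
    haveI hsing' := hsub n (p + 1) (max (p + 1) r₀) (le_max_left _ _) this
    obtain ⟨eH⟩ := hconv' (max (p + 1) r₀) (le_max_right _ _) n
    obtain ⟨vH, hvH, -⟩ := hH.2.2.2.1
    apply hvH
    have h0 : eH.symm vH = 0 := Subsingleton.elim _ _
    have := congrArg eH h0
    rwa [eH.apply_symm_apply, map_zero] at this
  exact page_step (T p) (T (p + 1)) (d p) (m p) (m (p + 1)) (hcomm' p) (hleib' p)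
    (hmker p) (B p) (hB0 p) (hB p)
    (fun k => (iso p k).symm.toLinearMap.comp
      ((B p k).comap (LinearMap.ker (d p k)).subtype).mkQ)
    (hπs p) (hπ0 p) (hπm p) n hPDp hvan
end

section
/- If (A*, d) is a finite-dimensional DGA of n-PD-type and x ∈ Aⁱ is a cocycle whose cohomology class pairs trivially with all of H^{n-i}(A) (i.e., [x]·[y] = 0 in Hⁿ(A) for all cocycles y ∈ A^{n-i}), then [x] = 0 in Hⁱ(A). -/
/-- Auxiliary bilinear pairing on two graded pieces, valued in `ℝ` via a functional `ℓ`. -/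
def pairAux {A : Type*} [Ring A] [Algebra ℝ A] (ℓ : A →ₗ[ℝ] ℝ) (U W : Submodule ℝ A) :
    U →ₗ[ℝ] W →ₗ[ℝ] ℝ :=
  LinearMap.mk₂ ℝ (fun x y => ℓ ((x : A) * (y : A)))
    (fun x x' y => by simp [add_mul])
    (fun c x y => by simp [smul_mul_assoc])
    (fun x y y' => by simp [mul_add])
    (fun c x y => by simp [mul_smul_comm])

@[simp] lemma pairAux_apply {A : Type*} [Ring A] [Algebra ℝ A] (ℓ : A →ₗ[ℝ] ℝ)
    (U W : Submodule ℝ A) (x : U) (y : W) :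
    pairAux ℓ U W x y = ℓ ((x : A) * (y : A)) := rfl

set_option maxHeartbeats 1000000 in
/-- If `(A*, d)` is a finite-dimensional DGA of `n`-PD-type and `x ∈ Aⁱ` (`0 < i < n`) is a
cocycle whose class pairs trivially with all of `H^{n-i}(A)` (i.e. `x·y` is exact for every
cocycle `y ∈ A^{n-i}`), then `[x] = 0 in Hⁱ(A)`, i.e. `x` is exact. -/
theorem stmt_19 (A : Type*) [Ring A] [Algebra ℝ A] [FiniteDimensional ℝ A]
    (n : ℕ) (𝒜 : ℕ → Submodule ℝ A) [GradedAlgebra 𝒜]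
    (hcomm : ∀ (i j : ℕ) (x y : A), x ∈ 𝒜 i → y ∈ 𝒜 j →
      x * y = ((-1 : ℤ) ^ (i * j)) • (y * x))
    (hone : (1 : A) ≠ 0) (hzero : ∀ x ∈ 𝒜 0, ∃ c : ℝ, x = c • (1 : A))
    (htop : ∀ i, n < i → 𝒜 i = ⊥)
    (v : A) (hv : v ∈ 𝒜 n) (hvne : v ≠ 0) (hvspan : ∀ x ∈ 𝒜 n, ∃ c : ℝ, x = c • v)
    (hnd : ∀ i, 0 < i → i < n →
      (∀ x ∈ 𝒜 i, (∀ y ∈ 𝒜 (n - i), x * y = 0) → x = 0) ∧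
      (∀ y ∈ 𝒜 (n - i), (∀ x ∈ 𝒜 i, x * y = 0) → y = 0))
    (d : A →ₗ[ℝ] A)
    (hd : ∀ i, ∀ x ∈ 𝒜 i, d x ∈ 𝒜 (i + 1))
    (hdd : d.comp d = 0)
    (hleib : ∀ (i : ℕ) (x y : A), x ∈ 𝒜 i →
      d (x * y) = d x * y + ((-1 : ℤ) ^ i) • (x * d y))
    (hdn : ∀ x ∈ 𝒜 (n - 1), d x = 0)
    (hd0 : ∀ x ∈ 𝒜 0, d x = 0)
    (i : ℕ) (hi0 : 0 < i) (hin : i < n)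
    (x : A) (hx : x ∈ 𝒜 i) (hxd : d x = 0)
    (hpair : ∀ y ∈ 𝒜 (n - i), d y = 0 → x * y ∈ Submodule.map d (𝒜 (n - 1))) :
    x ∈ Submodule.map d (𝒜 (i - 1)) := by
  classical
  -- `d` vanishes on `𝒜 (n-1)`, so the pairing hypothesis says `x * y = 0`.
  have hpair' : ∀ y ∈ 𝒜 (n - i), d y = 0 → x * y = 0 := by
    intro y hy hdy
    obtain ⟨w, hw, hw'⟩ := hpair y hy hdy
    rw [← hw', hdn w hw]
  -- a functional `ℓ` with `ℓ v = 1`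
  obtain ⟨ℓ, hℓ⟩ := (LinearMap.toSpanSingleton ℝ A v).exists_leftInverse_of_injective
    (LinearMap.ker_toSpanSingleton ℝ hvne)
  have hℓv : ℓ v = 1 := by
    have := congrArg (fun f : ℝ →ₗ[ℝ] ℝ => f 1) hℓ
    simpa [LinearMap.toSpanSingleton_apply] using this
  have hℓ0 : ∀ w ∈ 𝒜 n, ℓ w = 0 → w = 0 := by
    intro w hw h0
    obtain ⟨c, rfl⟩ := hvspan w hw
    rw [map_smul, hℓv, smul_eq_mul, mul_one] at h0
    rw [h0, zero_smul]
  have h1mem : (1 : A) ∈ 𝒜 0 := SetLike.one_mem_graded 𝒜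
  -- index bookkeeping
  have eI : i - 1 + 1 = i := by omega
  have eJ : (n - i) + 1 = n - (i - 1) := by omega
  have eN1 : (i - 1) + (n - i) = n - 1 := by omega
  have eN : i + (n - i) = n := by omega
  have eN' : (i - 1) + (n - (i - 1)) = n := by omega
  -- restricted differentials
  have hD1 : ∀ u ∈ 𝒜 (i - 1), d u ∈ 𝒜 i := by
    intro u hu; have := hd (i - 1) u hu; rwa [eI] at this
  have hD2 : ∀ y ∈ 𝒜 (n - i), d y ∈ 𝒜 (n - (i - 1)) := by
    intro y hy; have := hd (n - i) y hy; rwa [eJ] at this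
  set D1 : (𝒜 (i - 1)) →ₗ[ℝ] (𝒜 i) := d.restrict hD1 with hD1def
  set D2 : (𝒜 (n - i)) →ₗ[ℝ] (𝒜 (n - (i - 1))) := d.restrict hD2 with hD2def
  -- pairings
  set P : (𝒜 i) →ₗ[ℝ] (𝒜 (n - i)) →ₗ[ℝ] ℝ := pairAux ℓ (𝒜 i) (𝒜 (n - i)) with hPdef
  set Q : (𝒜 (i - 1)) →ₗ[ℝ] (𝒜 (n - (i - 1))) →ₗ[ℝ] ℝ :=
    pairAux ℓ (𝒜 (i - 1)) (𝒜 (n - (i - 1))) with hQdef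
  -- products land in 𝒜 n
  have hmulV : ∀ (a : 𝒜 i) (b : 𝒜 (n - i)), (a : A) * (b : A) ∈ 𝒜 n := by
    intro a b
    have := SetLike.mul_mem_graded a.2 b.2
    rwa [eN] at this
  have hmulU : ∀ (a : 𝒜 (i - 1)) (b : 𝒜 (n - (i - 1))), (a : A) * (b : A) ∈ 𝒜 n := by
    intro a b
    have := SetLike.mul_mem_graded a.2 b.2
    rwa [eN'] at this
  -- injectivity of the pairings
  have hPinj : Function.Injective P := by
    rw [injective_iff_map_eq_zero]
    intro a ha
    refine Subtype.ext ((hnd i hi0 hin).1 a a.2 ?_)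
    intro y hy
    have h0 : ℓ ((a : A) * y) = 0 := by
      have := congrArg (fun f => f (⟨y, hy⟩ : 𝒜 (n - i))) ha
      simpa [hPdef] using this
    exact hℓ0 _ (hmulV a ⟨y, hy⟩) h0
  have hPflipinj : Function.Injective P.flip := by
    rw [injective_iff_map_eq_zero]
    intro b hb
    refine Subtype.ext ((hnd i hi0 hin).2 b b.2 ?_)
    intro y hy
    have h0 : ℓ (y * (b : A)) = 0 := by
      have := congrArg (fun f => f (⟨y, hy⟩ : 𝒜 i)) hb
      simpa [hPdef] using this
    exact hℓ0 _ (hmulV ⟨y, hy⟩ b) h0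
  have hQflipinj : Function.Injective Q.flip := by
    rw [injective_iff_map_eq_zero]
    intro b hb
    have hball : ∀ y ∈ 𝒜 (i - 1), y * (b : A) = 0 := by
      intro y hy
      have h0 : ℓ (y * (b : A)) = 0 := by
        have := congrArg (fun f => f (⟨y, hy⟩ : 𝒜 (i - 1))) hb
        simpa [hQdef] using this
      exact hℓ0 _ (hmulU ⟨y, hy⟩ b) h0
    refine Subtype.ext ?_
    rcases Nat.eq_or_lt_of_le hi0 with h1 | h1
    · -- i = 1 : pair with 1 ∈ 𝒜 0
      have h10 : (1 : A) ∈ 𝒜 (i - 1) := by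
        have hi1 : i - 1 = 0 := by omega
        rw [hi1]; exact h1mem
      have := hball 1 h10
      rwa [one_mul] at this
    · exact (hnd (i - 1) (by omega) (by omega)).2 b b.2 hball
  -- equal dimensions of the paired pieces
  have hVW : Module.finrank ℝ (𝒜 i) = Module.finrank ℝ (𝒜 (n - i)) := by
    have h1 : Module.finrank ℝ (𝒜 i) ≤ Module.finrank ℝ (Module.Dual ℝ (𝒜 (n - i))) :=
      LinearMap.finrank_le_finrank_of_injective hPinj
    have h2 : Module.finrank ℝ (𝒜 (n - i)) ≤ Module.finrank ℝ (Module.Dual ℝ (𝒜 i)) :=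
      LinearMap.finrank_le_finrank_of_injective hPflipinj
    rw [Subspace.dual_finrank_eq] at h1 h2
    omega
  -- P is bijective
  have hPsurj : Function.Surjective P := by
    have heq : Module.finrank ℝ (𝒜 i) = Module.finrank ℝ (Module.Dual ℝ (𝒜 (n - i))) := by
      rw [Subspace.dual_finrank_eq]; exact hVW
    exact (LinearMap.injective_iff_surjective_of_finrank_eq_finrank heq).mp hPinj
  -- the subspace of cocycles in degree n - i, and the orthogonality-testing map q
  set Z : Submodule ℝ (𝒜 (n - i)) := LinearMap.ker D2 with hZdef
  set q : (𝒜 i) →ₗ[ℝ] Module.Dual ℝ Z := (Z.subtype.dualMap).comp P with hqdef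
  have hqsurj : Function.Surjective q :=
    (LinearMap.dualMap_surjective_of_injective (K := ℝ) (V₁ := Z) (V₂ := 𝒜 (n - i)) Z.injective_subtype).comp hPsurj
  -- finrank of ker q
  have hkerq : Module.finrank ℝ (LinearMap.ker q) + Module.finrank ℝ Z
      = Module.finrank ℝ (𝒜 i) := by
    have h1 := LinearMap.finrank_range_add_finrank_ker q
    rw [LinearMap.range_eq_top.mpr hqsurj, finrank_top] at h1
    rw [Subspace.dual_finrank_eq (K := ℝ) (V := Z)] at h1
    omega
  -- adjointness : Q u (D2 y) = (-1)^i * P (D1 u) y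
  have hpow : ((-1 : ℤ) ^ i) = -((-1 : ℤ) ^ (i - 1)) := by
    conv_lhs => rw [show i = (i - 1) + 1 by omega]
    rw [pow_succ]; ring
  have hadj : ∀ (u : 𝒜 (i - 1)) (y : 𝒜 (n - i)),
      Q u (D2 y) = ((-1 : ℝ) ^ i) * P (D1 u) y := by
    intro u y
    have hz : d ((u : A) * (y : A)) = 0 := by
      apply hdn
      have := SetLike.mul_mem_graded u.2 y.2
      rwa [eN1] at this
    have hl := hleib (i - 1) (u : A) (y : A) u.2
    rw [hz] at hl
    have hrel : d (u : A) * (y : A) = -(((-1 : ℤ) ^ (i - 1)) • ((u : A) * d (y : A))) :=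
      eq_neg_of_add_eq_zero_left hl.symm
    have hrel' : d (u : A) * (y : A) = ((-1 : ℤ) ^ i) • ((u : A) * d (y : A)) := by
      rw [hrel, ← neg_smul, ← hpow]
    have hP1 : P (D1 u) y = ℓ (d (u : A) * (y : A)) := by
      simp [hPdef, hD1def, LinearMap.restrict_apply]
    have hQ1 : Q u (D2 y) = ℓ ((u : A) * d (y : A)) := by
      simp [hQdef, hD2def, LinearMap.restrict_apply]
    rw [hP1, hQ1, hrel', map_zsmul, zsmul_eq_mul]
    push_cast
    rw [← mul_assoc, ← mul_pow]
    norm_num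
  -- rank D2 ≤ rank D1
  set T : (𝒜 (n - i)) →ₗ[ℝ] Module.Dual ℝ (𝒜 (i - 1)) := Q.flip.comp D2 with hTdef
  have hTker : LinearMap.ker T = LinearMap.ker D2 := by
    rw [hTdef, LinearMap.ker_comp, LinearMap.ker_eq_bot.mpr hQflipinj, Submodule.comap_bot]
  have hTrange : LinearMap.range T ≤ LinearMap.range D1.dualMap := by
    rintro f ⟨y, rfl⟩
    have hTy : T y = ((-1 : ℝ) ^ i) • D1.dualMap (P.flip y) := by
      ext u
      simp only [hTdef, LinearMap.comp_apply, LinearMap.flip_apply, LinearMap.smul_apply,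
        LinearMap.dualMap_apply, smul_eq_mul]
      exact hadj u y
    rw [hTy]
    exact Submodule.smul_mem _ _ ⟨P.flip y, rfl⟩
  have hrank21 : Module.finrank ℝ (LinearMap.range D2)
      ≤ Module.finrank ℝ (LinearMap.range D1) := by
    have h1 := LinearMap.finrank_range_add_finrank_ker T
    have h2 := LinearMap.finrank_range_add_finrank_ker D2
    rw [hTker] at h1
    have h3 : Module.finrank ℝ (LinearMap.range T)
        ≤ Module.finrank ℝ (LinearMap.range D1.dualMap) := Submodule.finrank_mono hTrange
    rw [LinearMap.finrank_range_dualMap_eq_finrank_range] at h3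
    omega
  -- range D1 ⊆ ker q
  have horth : LinearMap.range D1 ≤ LinearMap.ker q := by
    rintro a ⟨u, rfl⟩
    rw [LinearMap.mem_ker]
    ext z
    have hD2z : D2 (z : 𝒜 (n - i)) = 0 := z.2
    have h := hadj u (z : 𝒜 (n - i))
    rw [hD2z, map_zero] at h
    have hPz : P (D1 u) (z : 𝒜 (n - i)) = 0 :=
      (mul_eq_zero.mp h.symm).resolve_left (pow_ne_zero _ (by norm_num))
    show (Z.subtype.dualMap.comp P) (D1 u) z = _
    simp only [LinearMap.comp_apply, LinearMap.dualMap_apply, LinearMap.zero_apply,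
      Submodule.coe_subtype]
    exact hPz
  -- dimension count : range D1 = ker q
  have hD2rank : Module.finrank ℝ (LinearMap.range D2) + Module.finrank ℝ Z
      = Module.finrank ℝ (𝒜 (n - i)) := by
    have := LinearMap.finrank_range_add_finrank_ker D2
    rw [← hZdef] at this
    exact this
  have hle : Module.finrank ℝ (LinearMap.ker q)
      ≤ Module.finrank ℝ (LinearMap.range D1) := by omega
  have heq : LinearMap.range D1 = LinearMap.ker q :=
    Submodule.eq_of_le_of_finrank_le horth hle
  -- x lies in ker q
  have hxker : (⟨x, hx⟩ : 𝒜 i) ∈ LinearMap.ker q := by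
    rw [LinearMap.mem_ker]
    ext z
    have hdz : d ((z : 𝒜 (n - i)) : A) = 0 := by
      have hD2z : D2 (z : 𝒜 (n - i)) = 0 := z.2
      have h1 : ((D2 (z : 𝒜 (n - i))) : A) = d ((z : 𝒜 (n - i)) : A) :=
        LinearMap.restrict_coe_apply _ _ _
      rw [hD2z, ZeroMemClass.coe_zero] at h1
      exact h1.symm
    have h0 : x * ((z : 𝒜 (n - i)) : A) = 0 := hpair' _ (z : 𝒜 (n - i)).2 hdz
    show (Z.subtype.dualMap.comp P) ⟨x, hx⟩ z = _
    simp only [LinearMap.comp_apply, LinearMap.dualMap_apply, LinearMap.zero_apply,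
      Submodule.coe_subtype, hPdef, pairAux_apply, h0, map_zero]
  rw [← heq] at hxker
  obtain ⟨u, hu⟩ := hxker
  refine ⟨(u : A), u.2, ?_⟩
  have h1 : ((D1 u) : A) = d ((u : A)) := LinearMap.restrict_coe_apply _ _ _
  rw [hu] at h1
  exact h1.symm
end
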